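/- Let m be a natural number and let g : Fin m → MvPolynomial (Fin m) ℚ be a family of polynomials satisfying the closedness condition pderiv i (g j) = pderiv j (g i) for all i, j : Fin m. Then there exists a polynomial f ∈ MvPolynomial (Fin m) ℚ with pderiv i f = g i for every i. -/

import Mathlib

open MvPolynomial Finsupp

private lemma sub_add_single_cancel {m : ℕ} (s : Fin m →₀ ℕ) (j : Fin m) (h : s j ≠ 0) :
    s - Finsupp.single j 1 + Finsupp.single j 1 = s := by
  ext k
  simp only [Finsupp.add_apply, Finsupp.tsub_apply, Finsupp.single_apply]
  split_ifs with hk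
  · subst hk; omega
  · omega

private lemma single_add_sub_cancel {m : ℕ} (s : Fin m →₀ ℕ) (j : Fin m) (h : s j ≠ 0) :
    Finsupp.single j 1 + (s - Finsupp.single j 1) = s := by
  rw [add_comm]; exact sub_add_single_cancel s j h

private lemma coeff_pderiv {m : ℕ} (i : Fin m) (p : MvPolynomial (Fin m) ℚ)
    (σ : Fin m →₀ ℕ) :
    MvPolynomial.coeff σ (MvPolynomial.pderiv i p)
      = ((σ i + 1 : ℕ) : ℚ) * MvPolynomial.coeff (σ + Finsupp.single i 1) p := by
  classical
  induction p using MvPolynomial.induction_on' with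
  | add p q hp hq => simp [hp, hq, mul_add]
  | monomial s a =>
    rw [pderiv_monomial]
    simp only [coeff_monomial]
    by_cases h : s = σ + Finsupp.single i 1
    · subst h
      have h1 : σ + Finsupp.single i 1 - Finsupp.single i 1 = σ := by
        ext k; simp [Finsupp.single_apply]
      have h2 : ((σ + Finsupp.single i 1 : Fin m →₀ ℕ)) i = σ i + 1 := by simp
      rw [if_pos h1, if_pos rfl, h2]
      push_cast; ring
    · rw [if_neg h]
      by_cases hsi : s i = 0
      · simp [hsi]
      · have : s - Finsupp.single i 1 ≠ σ := by
          intro hc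
          apply h
          rw [← hc, sub_add_single_cancel s i hsi]
        simp [this]

private lemma coeff_X_mul_pderiv {m : ℕ} (j : Fin m) (p : MvPolynomial (Fin m) ℚ)
    (σ : Fin m →₀ ℕ) :
    MvPolynomial.coeff σ (X j * MvPolynomial.pderiv j p)
      = ((σ j : ℕ) : ℚ) * MvPolynomial.coeff σ p := by
  classical
  induction p using MvPolynomial.induction_on' with
  | add p q hp hq => simp [hp, hq, mul_add]
  | monomial s a =>
    rw [pderiv_monomial, X, monomial_mul, one_mul]
    simp only [coeff_monomial]
    by_cases h : s = σ
    · subst h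
      by_cases hsj : s j = 0
      · have : Finsupp.single j 1 + (s - Finsupp.single j 1) ≠ s := by
          intro hc
          have := congrArg (fun t => t j) hc
          simp [Finsupp.single_apply, hsj] at this
        simp [this, hsj]
      · rw [if_pos (single_add_sub_cancel s j hsj), if_pos rfl]
        ring
    · rw [if_neg h]
      by_cases hsj : s j = 0
      · simp [hsj]
      · have : Finsupp.single j 1 + (s - Finsupp.single j 1) ≠ σ := by
          rw [single_add_sub_cancel s j hsj]; exact h
        simp [this]

/-- **Algebraic Poincaré lemma in degree one for polynomial rings over ℚ**
(degree-one part of Lemma 3.3(b) of Ausoni–Rognes): every closed polynomial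
`1`-form `∑ gᵢ dXᵢ` over `ℚ` is exact. -/
theorem stmt4 (m : ℕ) (g : Fin m → MvPolynomial (Fin m) ℚ)
    (hclosed : ∀ i j : Fin m,
      MvPolynomial.pderiv i (g j) = MvPolynomial.pderiv j (g i)) :
    ∃ f : MvPolynomial (Fin m) ℚ, ∀ i : Fin m, MvPolynomial.pderiv i f = g i := by
  classical
  set H : MvPolynomial (Fin m) ℚ := ∑ j : Fin m, X j * g j with hH
  -- Euler identity for the closed form
  have key : ∀ (i : Fin m) (σ : Fin m →₀ ℕ),
      MvPolynomial.coeff σ (MvPolynomial.pderiv i H)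
        = (((∑ j : Fin m, σ j) + 1 : ℕ) : ℚ) * MvPolynomial.coeff σ (g i) := by
    intro i σ
    have expand : MvPolynomial.pderiv i H
        = g i + ∑ j : Fin m, X j * MvPolynomial.pderiv j (g i) := by
      rw [hH, map_sum]
      have : ∀ j : Fin m, MvPolynomial.pderiv i (X j * g j)
          = (if j = i then g i else 0) + X j * MvPolynomial.pderiv j (g i) := by
        intro j
        rw [pderiv_mul, hclosed i j]
        by_cases h : j = i
        · subst h; simp [pderiv_X_self]
        · simp [pderiv_X_of_ne h, h]
      simp only [this, Finset.sum_add_distrib, Finset.sum_ite_eq', Finset.mem_univ, if_pos]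
    rw [expand, MvPolynomial.coeff_add, MvPolynomial.coeff_sum]
    simp only [coeff_X_mul_pderiv]
    push_cast
    rw [← Finset.sum_mul]
    ring
  -- the primitive
  refine ⟨∑ σ ∈ H.support, monomial σ
      (MvPolynomial.coeff σ H / ((∑ j : Fin m, σ j : ℕ) : ℚ)), ?_⟩
  intro i
  have hf : ∀ τ : Fin m →₀ ℕ,
      MvPolynomial.coeff τ (∑ σ ∈ H.support, monomial σ
        (MvPolynomial.coeff σ H / ((∑ j : Fin m, σ j : ℕ) : ℚ)))
      = MvPolynomial.coeff τ H / ((∑ j : Fin m, τ j : ℕ) : ℚ) := by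
    intro τ
    rw [MvPolynomial.coeff_sum]
    simp only [MvPolynomial.coeff_monomial]
    rw [Finset.sum_ite_eq' H.support τ]
    split_ifs with h
    · rfl
    · rw [MvPolynomial.notMem_support_iff.mp h, zero_div]
  apply MvPolynomial.ext
  intro σ
  rw [_root_.coeff_pderiv, hf]
  have hdeg : (∑ j : Fin m, (σ + Finsupp.single i 1 : Fin m →₀ ℕ) j) = (∑ j : Fin m, σ j) + 1 := by
    simp only [Finsupp.add_apply, Finset.sum_add_distrib, Finsupp.single_apply]
    rw [Finset.sum_ite_eq Finset.univ i]
    simp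
  have hkey := key i σ
  rw [_root_.coeff_pderiv i H σ] at hkey
  rw [hdeg]
  have hne : (((∑ j : Fin m, σ j) + 1 : ℕ) : ℚ) ≠ 0 := by
    exact_mod_cast (Nat.succ_ne_zero (∑ j : Fin m, σ j))
  push_cast at hkey ⊢
  field_simp
  linarith [hkey]
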